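/- Let κ₁, κ₂ be real numbers with κ₁ > 0 and κ₂ < κ₁, set θ₁ = (κ₁ − κ₂)/κ₁, and define f(x) = x · ln(1 − κ₁ + (κ₁ − κ₂)/x), with the convention f(0) = 0. Let θ₀ be a real number with θ₀ ≤ min{1, θ₁}, let x* ∈ (0, θ₁) satisfy f′(x*) = 0, and set α* = min{1, max{x*, θ₀}}. Then α* lies in the interval [max{0, θ₀}, min{1, θ₁}], and for every α with max{0, θ₀} ≤ α ≤ min{1, θ₁} one has f(α) ≤ f(α*). -/

import Mathlib

open Real Set

open Real Set

lemma ots_lin_pos {κ₁ κ₂ : ℝ} (hκ₁ : 0 < κ₁) (hκ : κ₂ < κ₁) {x : ℝ} (hx0 : 0 < x)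
    (hx1 : x ≤ (κ₁ - κ₂) / κ₁) : 0 < (1 - κ₁) * x + (κ₁ - κ₂) := by
  have h := (le_div_iff₀ hκ₁).mp hx1
  nlinarith

lemma ots_arg_ge_one {κ₁ κ₂ : ℝ} (hκ₁ : 0 < κ₁) (hκ : κ₂ < κ₁) {x : ℝ} (hx0 : 0 < x)
    (hx1 : x ≤ (κ₁ - κ₂) / κ₁) : 1 ≤ 1 - κ₁ + (κ₁ - κ₂) / x := by
  have h := (le_div_iff₀ hκ₁).mp hx1
  have h2 : κ₁ ≤ (κ₁ - κ₂) / x := (le_div_iff₀ hx0).mpr (by nlinarith)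
  linarith

lemma ots_hasDerivAt_F {κ₁ κ₂ : ℝ} (hκ₁ : 0 < κ₁) (hκ : κ₂ < κ₁) {x : ℝ} (hx0 : 0 < x)
    (hx1 : x ≤ (κ₁ - κ₂) / κ₁) :
    HasDerivAt (fun x : ℝ => x * Real.log (1 - κ₁ + (κ₁ - κ₂) / x))
      (Real.log (1 - κ₁ + (κ₁ - κ₂) / x) - (κ₁ - κ₂) / ((1 - κ₁) * x + (κ₁ - κ₂))) x := by
  have hxne : x ≠ 0 := ne_of_gt hx0
  have hargpos : 0 < 1 - κ₁ + (κ₁ - κ₂) / x :=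
    lt_of_lt_of_le one_pos (ots_arg_ge_one hκ₁ hκ hx0 hx1)
  have hL : 0 < (1 - κ₁) * x + (κ₁ - κ₂) := ots_lin_pos hκ₁ hκ hx0 hx1
  have h1 : HasDerivAt (fun x : ℝ => 1 - κ₁ + (κ₁ - κ₂) / x)
      ((κ₁ - κ₂) * (-(x ^ 2)⁻¹)) x := by
    simpa [div_eq_mul_inv] using ((hasDerivAt_inv hxne).const_mul (κ₁ - κ₂)).const_add (1 - κ₁)
  have h2 := h1.log (ne_of_gt hargpos)
  have h3 := (hasDerivAt_id x).mul h2
  convert h3 using 1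
  · rfl
  · rfl
  · rfl
  simp only [id]
  field_simp
  ring

lemma ots_hasDerivAt_G {κ₁ κ₂ : ℝ} (hκ₁ : 0 < κ₁) (hκ : κ₂ < κ₁) {x : ℝ} (hx0 : 0 < x)
    (hx1 : x ≤ (κ₁ - κ₂) / κ₁) :
    HasDerivAt (fun x : ℝ => Real.log (1 - κ₁ + (κ₁ - κ₂) / x)
        - (κ₁ - κ₂) / ((1 - κ₁) * x + (κ₁ - κ₂)))
      (-(κ₁ - κ₂) ^ 2 / (x * ((1 - κ₁) * x + (κ₁ - κ₂)) ^ 2)) x := by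
  have hxne : x ≠ 0 := ne_of_gt hx0
  have hargpos : 0 < 1 - κ₁ + (κ₁ - κ₂) / x :=
    lt_of_lt_of_le one_pos (ots_arg_ge_one hκ₁ hκ hx0 hx1)
  have hL : 0 < (1 - κ₁) * x + (κ₁ - κ₂) := ots_lin_pos hκ₁ hκ hx0 hx1
  have h1 : HasDerivAt (fun x : ℝ => 1 - κ₁ + (κ₁ - κ₂) / x)
      ((κ₁ - κ₂) * (-(x ^ 2)⁻¹)) x := by
    simpa [div_eq_mul_inv] using ((hasDerivAt_inv hxne).const_mul (κ₁ - κ₂)).const_add (1 - κ₁)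
  have h2 := h1.log (ne_of_gt hargpos)
  have hlin : HasDerivAt (fun x : ℝ => (1 - κ₁) * x + (κ₁ - κ₂)) (1 - κ₁) x := by
    simpa using ((hasDerivAt_id x).const_mul (1 - κ₁)).add_const (κ₁ - κ₂)
  have h4 := (hasDerivAt_const x (κ₁ - κ₂)).div hlin (ne_of_gt hL)
  have h5 := h2.sub h4
  convert h5 using 1
  · rfl
  · rfl
  · rfl
  field_simp
  ring

/-- Lemma 1: the optimal time-sharing coefficient is α* = min{1, max{x*, θ₀}}.
Note that `f 0 = 0 * Real.log (1 - κ₁ + (κ₁ - κ₂) / 0) = 0`, so the convention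
f(0) = 0 holds automatically. -/
theorem optimal_time_sharing
    (κ₁ κ₂ : ℝ) (hκ₁ : 0 < κ₁) (hκ : κ₂ < κ₁)
    (θ₁ : ℝ) (hθ₁ : θ₁ = (κ₁ - κ₂) / κ₁)
    (θ₀ : ℝ) (hθ₀ : θ₀ ≤ min 1 θ₁)
    (xstar : ℝ) (hxstar : xstar ∈ Set.Ioo 0 θ₁)
    (hcrit : deriv (fun x : ℝ => x * Real.log (1 - κ₁ + (κ₁ - κ₂) / x)) xstar = 0)
    (αstar : ℝ) (hαstar : αstar = min 1 (max xstar θ₀)) :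
    αstar ∈ Set.Icc (max 0 θ₀) (min 1 θ₁) ∧
      ∀ α : ℝ, max 0 θ₀ ≤ α → α ≤ min 1 θ₁ →
        α * Real.log (1 - κ₁ + (κ₁ - κ₂) / α)
          ≤ αstar * Real.log (1 - κ₁ + (κ₁ - κ₂) / αstar) := by
  subst hθ₁ hαstar
  set θ₁ : ℝ := (κ₁ - κ₂) / κ₁ with hθ₁def
  set F : ℝ → ℝ := fun x : ℝ => x * Real.log (1 - κ₁ + (κ₁ - κ₂) / x) with hF
  set G : ℝ → ℝ := fun x : ℝ => Real.log (1 - κ₁ + (κ₁ - κ₂) / x)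
      - (κ₁ - κ₂) / ((1 - κ₁) * x + (κ₁ - κ₂)) with hG
  obtain ⟨hxs0, hxs1⟩ := hxstar
  have hθ₁pos : 0 < θ₁ := lt_trans hxs0 hxs1
  have hθ₀1 : θ₀ ≤ 1 := le_trans hθ₀ (min_le_left _ _)
  have hθ₀θ₁ : θ₀ ≤ θ₁ := le_trans hθ₀ (min_le_right _ _)
  -- F is nonnegative on (0, θ₁]
  have hFnonneg : ∀ x : ℝ, 0 < x → x ≤ θ₁ → 0 ≤ F x := by
    intro x hx0 hx1
    have := ots_arg_ge_one hκ₁ hκ hx0 hx1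
    exact mul_nonneg hx0.le (Real.log_nonneg this)
  -- G xstar = 0
  have hGxs : G xstar = 0 := by
    rw [← hcrit, (ots_hasDerivAt_F hκ₁ hκ hxs0 hxs1.le).deriv]
  -- G is strictly antitone on Ioc 0 θ₁
  have hGanti : StrictAntiOn G (Ioc 0 θ₁) := by
    apply strictAntiOn_of_deriv_neg (convex_Ioc 0 θ₁)
    · exact fun x hx =>
        (ots_hasDerivAt_G hκ₁ hκ hx.1 hx.2).continuousAt.continuousWithinAt
    · intro x hx
      rw [interior_Ioc] at hx
      rw [(ots_hasDerivAt_G hκ₁ hκ hx.1 hx.2.le).deriv]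
      apply div_neg_of_neg_of_pos
      · have hc : 0 < κ₁ - κ₂ := sub_pos.mpr hκ
        nlinarith
      · have hL := ots_lin_pos hκ₁ hκ hx.1 hx.2.le
        exact mul_pos hx.1 (pow_pos hL 2)
  -- deriv F positive on Ioo 0 xstar, negative on Ioo xstar θ₁
  have hsignpos : ∀ x : ℝ, 0 < x → x < xstar → 0 < G x := by
    intro x hx0 hx1
    have := hGanti ⟨hx0, le_trans hx1.le hxs1.le⟩ ⟨hxs0, hxs1.le⟩ hx1
    rwa [hGxs] at this
  have hsignneg : ∀ x : ℝ, xstar < x → x ≤ θ₁ → G x < 0 := by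
    intro x hx0 hx1
    have := hGanti ⟨hxs0, hxs1.le⟩ ⟨lt_trans hxs0 hx0, hx1⟩ hx0
    rwa [hGxs] at this
  -- monotonicity of F
  have hmono : StrictMonoOn F (Ioc 0 xstar) := by
    apply strictMonoOn_of_deriv_pos (convex_Ioc 0 xstar)
    · exact fun x hx =>
        (ots_hasDerivAt_F hκ₁ hκ hx.1 (le_trans hx.2 hxs1.le)).continuousAt.continuousWithinAt
    · intro x hx
      rw [interior_Ioc] at hx
      rw [(ots_hasDerivAt_F hκ₁ hκ hx.1 (le_trans hx.2.le hxs1.le)).deriv]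
      exact hsignpos x hx.1 hx.2
  have hanti : AntitoneOn F (Icc xstar θ₁) := by
    apply antitoneOn_of_deriv_nonpos (convex_Icc xstar θ₁)
    · exact fun x hx =>
        (ots_hasDerivAt_F hκ₁ hκ (lt_of_lt_of_le hxs0 hx.1) hx.2).continuousAt.continuousWithinAt
    · intro x hx
      rw [interior_Icc] at hx
      exact (ots_hasDerivAt_F hκ₁ hκ (lt_trans hxs0 hx.1) hx.2.le).differentiableAt.differentiableWithinAt
    · intro x hx
      rw [interior_Icc] at hx
      rw [(ots_hasDerivAt_F hκ₁ hκ (lt_trans hxs0 hx.1) hx.2.le).deriv]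
      exact (hsignneg x hx.1 hx.2.le).le
  -- F α ≤ F xstar for all feasible α > 0 with α ≤ θ₁
  have hkey : ∀ x : ℝ, 0 < x → x ≤ θ₁ → F x ≤ F xstar := by
    intro x hx0 hx1
    rcases le_or_gt x xstar with h | h
    · rcases eq_or_lt_of_le h with rfl | h'
      · exact le_refl _
      · exact (hmono ⟨hx0, h⟩ ⟨hxs0, le_refl _⟩ h').le
    · exact hanti ⟨le_refl _, hxs1.le⟩ ⟨h.le, hx1⟩ h.le
  set αs : ℝ := min 1 (max xstar θ₀) with hαs
  -- location of αstar
  have hαs0 : 0 < αs := lt_min (by linarith) (lt_max_of_lt_left hxs0)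
  have hαsθ₁ : αs ≤ θ₁ := le_trans (min_le_right _ _) (max_le hxs1.le hθ₀θ₁)
  have hmem : αs ∈ Icc (max 0 θ₀) (min 1 θ₁) := by
    constructor
    · exact max_le hαs0.le (le_min hθ₀1 (le_max_right _ _))
    · exact le_min (min_le_left _ _) hαsθ₁
  refine ⟨hmem, ?_⟩
  intro α hα0 hα1
  have hα1' : α ≤ 1 := le_trans hα1 (min_le_left _ _)
  have hαθ₁ : α ≤ θ₁ := le_trans hα1 (min_le_right _ _)
  rcases eq_or_lt_of_le (le_trans (le_max_left 0 θ₀) hα0) with h0 | h0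
  · -- α = 0 : F 0 = 0
    rw [← h0]
    have : F 0 = 0 := by simp [hF]
    rw [show (0:ℝ) * Real.log (1 - κ₁ + (κ₁ - κ₂) / 0) = F 0 from rfl, this]
    exact hFnonneg αs hαs0 hαsθ₁
  -- α > 0
  show F α ≤ F αs
  rcases le_or_gt θ₀ xstar with hc | hc
  · -- αstar = min 1 xstar
    have hmax : max xstar θ₀ = xstar := max_eq_left hc
    rcases le_or_gt xstar 1 with h1 | h1
    · have : αs = xstar := by rw [hαs, hmax, min_eq_right h1]
      rw [this]; exact hkey α h0 hαθ₁
    · have hαs1 : αs = 1 := by rw [hαs, hmax, min_eq_left h1.le]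
      rw [hαs1]
      rcases eq_or_lt_of_le hα1' with rfl | hlt
      · exact le_refl _
      · exact (hmono ⟨h0, le_trans hα1' h1.le⟩ ⟨one_pos, h1.le⟩ hlt).le
  · -- θ₀ > xstar ⇒ αstar = θ₀
    have hmax : max xstar θ₀ = θ₀ := max_eq_right hc.le
    have hαsθ₀ : αs = θ₀ := by rw [hαs, hmax, min_eq_right hθ₀1]
    rw [hαsθ₀]
    have hαθ₀ : θ₀ ≤ α := le_trans (le_max_right 0 θ₀) hα0
    exact hanti ⟨hc.le, hθ₀θ₁⟩ ⟨le_trans hc.le hαθ₀, hαθ₁⟩ hαθ₀
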